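/- arXiv:1310.2872 — 2 statements merged into one kernel-verified Lean document; each statement's English description precedes it below -/
import Mathlib

section
/- Let G be a finite simple graph on vertex set {x_{11}, …, x_{n1}}, let m_1, …, m_n ≥ 2 be integers, and let G_1, …, G_n be connected finite simple graphs with V(G_i) = {x_{i1}, …, x_{im_i}}. If the attachment graph G(G_1, …, G_n) is vertex decomposable, then G_i is vertex decomposable for every i = 1, …, n. -/
variable {V : Type*} [DecidableEq V]

/-- `S` is an independent set of the induced subgraph of `G` on the vertex set `A`. -/
def IsIndepIn (G : SimpleGraph V) (A S : Finset V) : Prop :=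
  S ⊆ A ∧ ∀ u ∈ S, ∀ v ∈ S, ¬G.Adj u v

/-- `S` is a maximal independent set of the induced subgraph of `G` on the vertex set `A`. -/
def IsMaxIndepIn (G : SimpleGraph V) (A S : Finset V) : Prop :=
  IsIndepIn G A S ∧ ∀ T, IsIndepIn G A T → S ⊆ T → S = T

/-- The induced subgraph of `G` on `A` is unmixed: all maximal independent sets
have the same cardinality. -/
def UnmixedOn (G : SimpleGraph V) (A : Finset V) : Prop :=
  ∀ S T, IsMaxIndepIn G A S → IsMaxIndepIn G A T → S.card = T.card

open scoped Classical in
/-- The vertex set `A \ N_G[x]`. -/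
noncomputable def delClosedNbhd (G : SimpleGraph V) (A : Finset V) (x : V) : Finset V :=
  A.filter fun y => y ≠ x ∧ ¬G.Adj x y

/-- The induced subgraph of `G` on `A` is vertex decomposable. -/
inductive VertexDecomposableOn (G : SimpleGraph V) : Finset V → Prop
  | edgeless (A : Finset V) (h : ∀ u ∈ A, ∀ v ∈ A, ¬G.Adj u v) : VertexDecomposableOn G A
  | shed (A : Finset V) (x : V) (hx : x ∈ A)
      (hlink : VertexDecomposableOn G (delClosedNbhd G A x))
      (hdel : VertexDecomposableOn G (A.erase x))
      (hexch : ∀ S, IsIndepIn G (delClosedNbhd G A x) S →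
        ∃ y ∈ A, G.Adj x y ∧ IsIndepIn G (A.erase x) (insert y S)) :
      VertexDecomposableOn G A

/-- `x` is a shedding vertex of the induced subgraph of `G` on `A`. -/
def IsSheddingVertexOn (G : SimpleGraph V) (A : Finset V) (x : V) : Prop :=
  x ∈ A ∧
  VertexDecomposableOn G (delClosedNbhd G A x) ∧
  VertexDecomposableOn G (A.erase x) ∧
  ∀ S, IsIndepIn G (delClosedNbhd G A x) S →
    ∃ y ∈ A, G.Adj x y ∧ IsIndepIn G (A.erase x) (insert y S)

/-- The independence complex of the induced subgraph of `G` on `A` is shellable: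
there is an ordering `F 0, F 1, …` of its facets (the maximal independent sets) such
that for every `i`, every face of the subcomplex `(⋃ j < i, ⟨F j⟩) ∩ ⟨F i⟩` is contained
in a face of that subcomplex of cardinality `(F i).card - 1` (i.e. the subcomplex is
pure of dimension `dim (F i) - 1`). -/
def ShellableOn (G : SimpleGraph V) (A : Finset V) : Prop :=
  ∃ (t : ℕ) (F : Fin t → Finset V),
    Function.Injective F ∧
    (∀ S, IsMaxIndepIn G A S ↔ ∃ i, F i = S) ∧
    ∀ i : Fin t, ∀ S : Finset V, S ⊆ F i → (∃ j, j < i ∧ S ⊆ F j) →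
      ∃ S' : Finset V, S ⊆ S' ∧ S' ⊆ F i ∧ (∃ j, j < i ∧ S' ⊆ F j) ∧
        S'.card = (F i).card - 1

/-- A graph is chordal if every cycle of length at least four has a chord, i.e. an
edge of the graph joining two vertices of the cycle that is not an edge of the cycle. -/
def IsChordal (G : SimpleGraph V) : Prop :=
  ∀ (x : V) (w : G.Walk x x), w.IsCycle → 4 ≤ w.length →
    ∃ u v, u ∈ w.support ∧ v ∈ w.support ∧ G.Adj u v ∧ s(u, v) ∉ w.edges

/-- The induced subgraph of `G` on `A` is a cycle graph on `m` vertices. -/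
def IsCycleGraphOn (G : SimpleGraph V) (A : Finset V) (m : ℕ) : Prop :=
  (∀ u v, G.Adj u v → u ∈ A ∧ v ∈ A) ∧
  Nonempty (G.induce (A : Set V) ≃g SimpleGraph.cycleGraph m)

/-- The independence number of the induced subgraph of `G` on `A`. -/
noncomputable def indepNumOn (G : SimpleGraph V) (A : Finset V) : ℕ :=
  sSup {k | ∃ S, IsIndepIn G A S ∧ S.card = k}

open scoped Classical in
/-- The vertex set `A \ N_G[S]`. -/
noncomputable def delIndepSet (G : SimpleGraph V) (A S : Finset V) : Finset V :=
  A.filter fun y => y ∉ S ∧ ∀ s ∈ S, ¬G.Adj s y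

lemma mem_delIndepSet {G : SimpleGraph V} {A S : Finset V} {y : V} :
    y ∈ delIndepSet G A S ↔ y ∈ A ∧ y ∉ S ∧ ∀ s ∈ S, ¬G.Adj s y := by
  classical
  simp [delIndepSet]

lemma mem_delClosedNbhd {G : SimpleGraph V} {A : Finset V} {x y : V} :
    y ∈ delClosedNbhd G A x ↔ y ∈ A ∧ y ≠ x ∧ ¬G.Adj x y := by
  classical
  simp [delClosedNbhd]

/-- Links of vertex decomposable complexes are vertex decomposable. -/
lemma vd_delIndepSet {G : SimpleGraph V} {A : Finset V}
    (hvd : VertexDecomposableOn G A) :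
    ∀ S, IsIndepIn G A S → VertexDecomposableOn G (delIndepSet G A S) := by
  induction hvd with
  | edgeless A h =>
    intro S hS
    exact VertexDecomposableOn.edgeless _ fun u hu v hv =>
      h u (mem_delIndepSet.mp hu).1 v (mem_delIndepSet.mp hv).1
  | shed A x hx hlink hdel hexch ihlink ihdel =>
    intro S hS
    obtain ⟨hSA, hSind⟩ := hS
    by_cases hxS : x ∈ S
    · -- x ∈ S : the link equals the link of S.erase x in A \ N[x]
      have heq : delIndepSet G A S = delIndepSet G (delClosedNbhd G A x) (S.erase x) := by
        ext y
        simp only [mem_delIndepSet, mem_delClosedNbhd, Finset.mem_erase]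
        constructor
        · rintro ⟨hyA, hyS, hady⟩
          exact ⟨⟨hyA, fun h => hyS (h ▸ hxS), hady x hxS⟩, fun h => hyS h.2,
            fun s hs => hady s hs.2⟩
        · rintro ⟨⟨hyA, hyx, hadxy⟩, hyS, hady⟩
          refine ⟨hyA, fun h => hyS ⟨hyx, h⟩, fun s hs => ?_⟩
          by_cases hsx : s = x
          · subst hsx; exact hadxy
          · exact hady s ⟨hsx, hs⟩
      rw [heq]
      refine ihlink _ ⟨fun s hs => ?_, fun u hu v hv =>
        hSind u (Finset.mem_of_mem_erase hu) v (Finset.mem_of_mem_erase hv)⟩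
      rw [Finset.mem_erase] at hs
      exact mem_delClosedNbhd.mpr ⟨hSA hs.2, hs.1,
        fun h => hSind x hxS s hs.2 h⟩
    · by_cases hxN : ∃ s ∈ S, G.Adj s x
      · -- x is dominated by S : the link equals the link of S in A.erase x
        obtain ⟨s₀, hs₀S, hs₀x⟩ := hxN
        have heq : delIndepSet G A S = delIndepSet G (A.erase x) S := by
          ext y
          simp only [mem_delIndepSet, Finset.mem_erase]
          constructor
          · rintro ⟨hyA, hyS, hady⟩
            refine ⟨⟨fun h => hady s₀ hs₀S (h ▸ hs₀x), hyA⟩, hyS, hady⟩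
          · rintro ⟨⟨_, hyA⟩, hyS, hady⟩
            exact ⟨hyA, hyS, hady⟩
        rw [heq]
        exact ihdel _ ⟨fun s hs => Finset.mem_erase.mpr ⟨fun h => hxS (h ▸ hs), hSA hs⟩, hSind⟩
      · -- x survives in the link; it is a shedding vertex there
        push_neg at hxN
        have hSlink : IsIndepIn G (delClosedNbhd G A x) S :=
          ⟨fun s hs => mem_delClosedNbhd.mpr ⟨hSA hs, fun h => hxS (h ▸ hs),
            fun h => hxN s hs h.symm⟩, hSind⟩
        have hxA' : x ∈ delIndepSet G A S := mem_delIndepSet.mpr ⟨hx, hxS, hxN⟩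
        refine VertexDecomposableOn.shed _ x hxA' ?_ ?_ ?_
        · have heq : delClosedNbhd G (delIndepSet G A S) x
              = delIndepSet G (delClosedNbhd G A x) S := by
            ext y
            simp only [mem_delIndepSet, mem_delClosedNbhd]
            tauto
          rw [heq]
          exact ihlink _ hSlink
        · have heq : (delIndepSet G A S).erase x = delIndepSet G (A.erase x) S := by
            ext y
            simp only [mem_delIndepSet, Finset.mem_erase]
            tauto
          rw [heq]
          exact ihdel _ ⟨fun s hs => Finset.mem_erase.mpr ⟨fun h => hxS (h ▸ hs), hSA hs⟩, hSind⟩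
        · intro T hT
          obtain ⟨hTsub, hTind⟩ := hT
          have hTsub' : ∀ t ∈ T, t ∈ delIndepSet G (delClosedNbhd G A x) S := by
            intro t ht
            have h1 := hTsub ht
            rw [mem_delClosedNbhd, mem_delIndepSet] at h1
            rw [mem_delIndepSet]
            exact ⟨mem_delClosedNbhd.mpr ⟨h1.1.1, h1.2.1, h1.2.2⟩, h1.1.2.1, h1.1.2.2⟩
          have hST : IsIndepIn G (delClosedNbhd G A x) (S ∪ T) := by
            refine ⟨fun z hz => ?_, fun u hu v hv huv => ?_⟩
            · rcases Finset.mem_union.mp hz with h | h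
              · exact hSlink.1 h
              · exact (mem_delIndepSet.mp (hTsub' z h)).1
            · rcases Finset.mem_union.mp hu with hu | hu <;>
                rcases Finset.mem_union.mp hv with hv | hv
              · exact hSind u hu v hv huv
              · exact (mem_delIndepSet.mp (hTsub' v hv)).2.2 u hu huv
              · exact (mem_delIndepSet.mp (hTsub' u hu)).2.2 v hv huv.symm
              · exact hTind u hu v hv huv
          obtain ⟨y, hyA, hxy, hins⟩ := hexch (S ∪ T) hST
          obtain ⟨hinsSub, hinsInd⟩ := hins
          have hyS : y ∉ S := fun h => hxN y h hxy.symm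
          have hyA' : y ∈ delIndepSet G A S := by
            refine mem_delIndepSet.mpr ⟨hyA, hyS, fun s hs => ?_⟩
            exact hinsInd s (Finset.mem_insert_of_mem (Finset.mem_union_left _ hs))
              y (Finset.mem_insert_self _ _)
          refine ⟨y, hyA', hxy, fun z hz => ?_, fun u hu v hv huv => ?_⟩
          · rcases Finset.mem_insert.mp hz with rfl | hzT
            · exact Finset.mem_erase.mpr ⟨fun h => G.irrefl (h ▸ hxy), hyA'⟩
            · have := hTsub hzT
              rw [mem_delClosedNbhd] at this
              exact Finset.mem_erase.mpr ⟨this.2.1, this.1⟩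
          · have hu' : u ∈ insert y (S ∪ T) := by
              rcases Finset.mem_insert.mp hu with rfl | h
              · exact Finset.mem_insert_self _ _
              · exact Finset.mem_insert_of_mem (Finset.mem_union_right _ h)
            have hv' : v ∈ insert y (S ∪ T) := by
              rcases Finset.mem_insert.mp hv with rfl | h
              · exact Finset.mem_insert_self _ _
              · exact Finset.mem_insert_of_mem (Finset.mem_union_right _ h)
            exact hinsInd u hu' v hv' huv

/-- Vertex decomposability only depends on the adjacency inside `A`. -/
lemma vd_congr {G G' : SimpleGraph V} {A : Finset V}
    (hvd : VertexDecomposableOn G A) :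
    (∀ u ∈ A, ∀ v ∈ A, (G.Adj u v ↔ G'.Adj u v)) → VertexDecomposableOn G' A := by
  induction hvd with
  | edgeless A h =>
    intro hag
    exact VertexDecomposableOn.edgeless _ fun u hu v hv hadj =>
      h u hu v hv ((hag u hu v hv).mpr hadj)
  | shed A x hx hlink hdel hexch ihlink ihdel =>
    intro hag
    have hsub1 : delClosedNbhd G A x ⊆ A := fun y hy => (mem_delClosedNbhd.mp hy).1
    have heq : delClosedNbhd G A x = delClosedNbhd G' A x := by
      ext y
      simp only [mem_delClosedNbhd]
      constructor
      · rintro ⟨hyA, hyx, hadj⟩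
        exact ⟨hyA, hyx, fun h => hadj ((hag x hx y hyA).mpr h)⟩
      · rintro ⟨hyA, hyx, hadj⟩
        exact ⟨hyA, hyx, fun h => hadj ((hag x hx y hyA).mp h)⟩
    refine VertexDecomposableOn.shed _ x hx ?_ ?_ ?_
    · rw [← heq]
      exact ihlink fun u hu v hv => hag u (hsub1 hu) v (hsub1 hv)
    · exact ihdel fun u hu v hv =>
        hag u (Finset.mem_of_mem_erase hu) v (Finset.mem_of_mem_erase hv)
    · intro S hS
      rw [← heq] at hS
      have hS' : IsIndepIn G (delClosedNbhd G A x) S := by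
        refine ⟨hS.1, fun u hu v hv hadj => hS.2 u hu v hv ?_⟩
        exact (hag u (hsub1 (hS.1 hu)) v (hsub1 (hS.1 hv))).mp hadj
      obtain ⟨y, hyA, hxy, hsub, hind⟩ := hexch S hS'
      refine ⟨y, hyA, (hag x hx y hyA).mp hxy, hsub, fun u hu v hv hadj => ?_⟩
      have hmem : ∀ z ∈ insert y S, z ∈ A := fun z hz =>
        Finset.mem_of_mem_erase (hsub hz)
      exact hind u hu v hv ((hag u (hmem u hu) v (hmem v hv)).mpr hadj)

/-- Every finite graph has a maximal (hence dominating) independent set containing a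
given vertex. -/
lemma exists_dominating_indep (G : SimpleGraph V) (A : Finset V) (u : V) (hu : u ∈ A) :
    ∃ T : Finset V, IsIndepIn G A T ∧ u ∈ T ∧
      ∀ y ∈ A, y ∈ T ∨ ∃ s ∈ T, G.Adj s y := by
  classical
  set 𝒮 := A.powerset.filter (fun T => (∀ a ∈ T, ∀ b ∈ T, ¬G.Adj a b) ∧ u ∈ T) with h𝒮
  have hne : 𝒮.Nonempty := by
    refine ⟨{u}, ?_⟩
    simp only [h𝒮, Finset.mem_filter, Finset.mem_powerset]
    refine ⟨Finset.singleton_subset_iff.mpr hu, fun a ha b hb => ?_, Finset.mem_singleton_self u⟩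
    rw [Finset.mem_singleton] at ha hb
    subst ha; subst hb; exact G.irrefl
  obtain ⟨T, hT, hTmax⟩ := Finset.exists_max_image 𝒮 Finset.card hne
  simp only [h𝒮, Finset.mem_filter, Finset.mem_powerset] at hT
  obtain ⟨hTA, hTind, hTu⟩ := hT
  refine ⟨T, ⟨hTA, hTind⟩, hTu, fun y hy => ?_⟩
  by_contra hcon
  push_neg at hcon
  obtain ⟨hyT, hdom⟩ := hcon
  have hins : insert y T ∈ 𝒮 := by
    simp only [h𝒮, Finset.mem_filter, Finset.mem_powerset]
    refine ⟨Finset.insert_subset hy hTA, fun a ha b hb hab => ?_,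
      Finset.mem_insert_of_mem hTu⟩
    rcases Finset.mem_insert.mp ha with ha' | ha' <;>
      rcases Finset.mem_insert.mp hb with hb' | hb'
    · subst ha'; subst hb'; exact G.irrefl hab
    · subst ha'; exact hdom b hb' hab.symm
    · subst hb'; exact hdom a ha' hab
    · exact hTind a ha' b hb' hab
  have := hTmax _ hins
  rw [Finset.card_insert_of_notMem hyT] at this
  omega
lemma exists_adj_of_reachable {W : Type*} {K : SimpleGraph W} {a b : W} (hne : a ≠ b)
    (h : K.Reachable a b) : ∃ c, K.Adj a c := by
  obtain ⟨w⟩ := h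
  cases w with
  | nil => exact absurd rfl hne
  | cons h p => exact ⟨_, h⟩
/-- If the attachment graph `G(G_1, …, G_n)` is vertex decomposable, then
each `Gs i` is vertex decomposable. -/
theorem stmt_1 {V : Type*} [DecidableEq V] (n : ℕ) (x : Fin n → V) (B : Fin n → Finset V)
    (G : SimpleGraph V) (Gs : Fin n → SimpleGraph V)
    (hxinj : Function.Injective x)
    (hGsupp : ∀ u v, G.Adj u v → (∃ i, u = x i) ∧ (∃ j, v = x j))
    (hxB : ∀ i, x i ∈ B i)
    (hBcard : ∀ i, 2 ≤ (B i).card)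
    (hBdisj : ∀ i j, i ≠ j → Disjoint (B i) (B j))
    (hGssupp : ∀ i, ∀ u v, (Gs i).Adj u v → u ∈ B i ∧ v ∈ B i)
    (hconn : ∀ i, ((Gs i).induce ((B i : Set V))).Connected)
    (hvd : VertexDecomposableOn (G ⊔ ⨆ i, Gs i) (Finset.univ.biUnion B)) :
    ∀ i, VertexDecomposableOn (Gs i) (B i) := by
  classical
  intro i
  set H := G ⊔ ⨆ k, Gs k with hH
  set A := Finset.univ.biUnion B with hA
  have hHadj : ∀ u v, H.Adj u v ↔ G.Adj u v ∨ ∃ k, (Gs k).Adj u v := by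
    intro u v
    simp [hH, SimpleGraph.sup_adj, SimpleGraph.iSup_adj]
  have honlyx : ∀ (a k : Fin n), x a ∈ B k → a = k := by
    intro a k h
    by_contra hne
    exact Finset.disjoint_left.mp (hBdisj a k hne) (hxB a) h
  have hBeq : ∀ (j k : Fin n) (u : V), u ∈ B j → u ∈ B k → j = k := by
    intro j k u hj hk
    by_contra hne
    exact Finset.disjoint_left.mp (hBdisj j k hne) hj hk
  -- classification of adjacency in the attachment graph
  have hclass : ∀ (u v : V) (j k : Fin n), H.Adj u v → u ∈ B j → v ∈ B k →
      (j = k ∧ (Gs j).Adj u v) ∨ (u = x j ∧ v = x k ∧ G.Adj u v) := by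
    intro u v j k hadj huj hvk
    rcases (hHadj u v).mp hadj with hG | ⟨m, hm⟩
    · obtain ⟨⟨a, rfl⟩, ⟨b, rfl⟩⟩ := hGsupp _ _ hG
      have ha := honlyx a j huj
      have hb := honlyx b k hvk
      subst ha; subst hb
      exact Or.inr ⟨rfl, rfl, hG⟩
    · obtain ⟨hum, hvm⟩ := hGssupp m u v hm
      have hjm := hBeq j m u huj hum
      have hkm := hBeq k m v hvk hvm
      subst hjm
      exact Or.inl ⟨hkm.symm ▸ rfl, hm⟩
  -- every vertex of a block has a neighbour inside the block
  have hnbr : ∀ j : Fin n, ∃ u ∈ B j, (Gs j).Adj (x j) u := by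
    intro j
    obtain ⟨v, hvB, hvne⟩ := Finset.exists_mem_ne (lt_of_lt_of_le one_lt_two (hBcard j)) (x j)
    have hxmem : (x j : V) ∈ (B j : Set V) := by simp [hxB j]
    have hvmem : (v : V) ∈ (B j : Set V) := by simp [hvB]
    have hne : (⟨x j, hxmem⟩ : (B j : Set V)) ≠ ⟨v, hvmem⟩ := by
      intro h
      exact hvne (congrArg Subtype.val h).symm
    have hreach := (hconn j).preconnected ⟨x j, hxmem⟩ ⟨v, hvmem⟩
    obtain ⟨c, hc⟩ := exists_adj_of_reachable hne hreach
    exact ⟨c.1, by simpa using c.2, by simpa using hc⟩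
  -- pick dominating independent sets avoiding the attachment vertices
  have hT : ∀ j : Fin n, ∃ T : Finset V, IsIndepIn (Gs j) (B j) T ∧ x j ∉ T ∧
      ∀ y ∈ B j, y ∈ T ∨ ∃ s ∈ T, (Gs j).Adj s y := by
    intro j
    obtain ⟨u, huB, hadj⟩ := hnbr j
    obtain ⟨T, hTind, hTu, hTdom⟩ := exists_dominating_indep (Gs j) (B j) u huB
    exact ⟨T, hTind, fun hxT => hTind.2 (x j) hxT u hTu hadj, hTdom⟩
  choose T hTind hTx hTdom using hT
  set S := (Finset.univ.erase i).biUnion T with hS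
  have hmemS : ∀ s, s ∈ S ↔ ∃ j : Fin n, j ≠ i ∧ s ∈ T j := by
    intro s
    rw [hS, Finset.mem_biUnion]
    constructor
    · rintro ⟨j, hj, h⟩
      exact ⟨j, (Finset.mem_erase.mp hj).1, h⟩
    · rintro ⟨j, hj, h⟩
      exact ⟨j, Finset.mem_erase.mpr ⟨hj, Finset.mem_univ j⟩, h⟩
  have hTsubB : ∀ j : Fin n, ∀ s ∈ T j, s ∈ B j := fun j s hs => (hTind j).1 hs
  have hSA : S ⊆ A := by
    intro s hs
    obtain ⟨j, _, hsT⟩ := (hmemS s).mp hs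
    exact Finset.mem_biUnion.mpr ⟨j, Finset.mem_univ j, hTsubB j s hsT⟩
  have hSnox : ∀ a : Fin n, x a ∉ S := by
    intro a hxa
    obtain ⟨j, _, hsT⟩ := (hmemS (x a)).mp hxa
    have := honlyx a j (hTsubB j _ hsT)
    subst this
    exact hTx a hsT
  have hSind : ∀ u ∈ S, ∀ v ∈ S, ¬H.Adj u v := by
    intro u hu v hv hadj
    obtain ⟨j, hji, huT⟩ := (hmemS u).mp hu
    obtain ⟨k, hki, hvT⟩ := (hmemS v).mp hv
    rcases hclass u v j k hadj (hTsubB j u huT) (hTsubB k v hvT) with ⟨rfl, hGs⟩ | ⟨rfl, _, _⟩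
    · exact (hTind j).2 u huT v hvT hGs
    · exact hTx j huT
  -- the link of S is exactly B i
  have heqBi : delIndepSet H A S = B i := by
    ext y
    rw [mem_delIndepSet]
    constructor
    · rintro ⟨hyA, hyS, hady⟩
      obtain ⟨j, _, hyB⟩ := Finset.mem_biUnion.mp hyA
      by_cases hji : j = i
      · exact hji ▸ hyB
      · rcases hTdom j y hyB with hyT | ⟨s, hsT, hGs⟩
        · exact absurd ((hmemS y).mpr ⟨j, hji, hyT⟩) hyS
        · exact absurd ((hHadj s y).mpr (Or.inr ⟨j, hGs⟩))
            (hady s ((hmemS s).mpr ⟨j, hji, hsT⟩))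
    · intro hyB
      refine ⟨Finset.mem_biUnion.mpr ⟨i, Finset.mem_univ i, hyB⟩, ?_, ?_⟩
      · intro hyS
        obtain ⟨j, hji, hyT⟩ := (hmemS y).mp hyS
        exact hji (hBeq j i y (hTsubB j y hyT) hyB)
      · intro s hsS hadj
        obtain ⟨j, hji, hsT⟩ := (hmemS s).mp hsS
        rcases hclass s y j i hadj (hTsubB j s hsT) hyB with ⟨rfl, _⟩ | ⟨rfl, _, _⟩
        · exact hji rfl
        · exact hTx j hsT
  have hvdBi : VertexDecomposableOn H (B i) := by
    rw [← heqBi]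
    exact vd_delIndepSet hvd S ⟨hSA, hSind⟩
  refine vd_congr hvdBi ?_
  intro u hu v hv
  constructor
  · intro hadj
    rcases hclass u v i i hadj hu hv with ⟨_, hGs⟩ | ⟨rfl, hvx, hG⟩
    · exact hGs
    · exact absurd (hvx ▸ hG) (G.irrefl)
  · intro hadj
    exact (hHadj u v).mpr (Or.inr ⟨i, hadj⟩)
end

section
/- Let G be a finite simple graph on vertex set {x_{11}, …, x_{n1}} with no isolated vertex, let m_1, …, m_n ≥ 2 be integers, and let G_1, …, G_n be connected finite simple graphs with V(G_i) = {x_{i1}, …, x_{im_i}}. Then the attachment graph G(G_1, …, G_n) is unmixed if and only if, for every i = 1, …, n, both G_i and G_i \ {x_{i1}} are unmixed. -/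
variable {V : Type*} [DecidableEq V]

/-- Any independent set extends to a maximal one. -/
lemma exists_max_ext (G : SimpleGraph V) (A S : Finset V) (h : IsIndepIn G A S) :
    ∃ T, S ⊆ T ∧ IsMaxIndepIn G A T := by
  classical
  obtain ⟨T, hTmem, hTmax⟩ := Finset.exists_max_image
      (A.powerset.filter fun T => IsIndepIn G A T ∧ S ⊆ T) Finset.card
      ⟨S, by simp only [Finset.mem_filter, Finset.mem_powerset]; exact ⟨h.1, h, subset_rfl⟩⟩
  simp only [Finset.mem_filter, Finset.mem_powerset] at hTmem
  refine ⟨T, hTmem.2.2, hTmem.2.1, ?_⟩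
  intro T' hT' hsub
  have hT'mem : T' ∈ A.powerset.filter fun T => IsIndepIn G A T ∧ S ⊆ T := by
    simp only [Finset.mem_filter, Finset.mem_powerset]
    exact ⟨hT'.1, hT', hTmem.2.2.trans hsub⟩
  exact Finset.eq_of_subset_of_card_le hsub (hTmax T' hT'mem)

/-- A maximal independent set dominates every uncovered vertex. -/
lemma max_dominates {G : SimpleGraph V} {A M : Finset V} (h : IsMaxIndepIn G A M)
    {y : V} (hy : y ∈ A) (hyM : y ∉ M) : ∃ z ∈ M, G.Adj y z := by
  by_contra hno
  push_neg at hno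
  have hins : IsIndepIn G A (insert y M) := by
    refine ⟨Finset.insert_subset hy h.1.1, ?_⟩
    intro a ha b hb hadj
    rcases Finset.mem_insert.1 ha with ha' | ha'
    · rcases Finset.mem_insert.1 hb with hb' | hb'
      · exact G.irrefl (ha' ▸ hb' ▸ hadj)
      · exact hno b hb' (ha' ▸ hadj)
    · rcases Finset.mem_insert.1 hb with hb' | hb'
      · exact hno a ha' (hb' ▸ hadj).symm
      · exact h.1.2 a ha' b hb' hadj
  have := h.2 _ hins (Finset.subset_insert _ _)
  exact hyM (this ▸ Finset.mem_insert_self y M)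

lemma walk_first_adj {W : Type*} {Γ : SimpleGraph W} {a b : W} (w : Γ.Walk a b) (h : a ≠ b) :
    ∃ c, Γ.Adj a c := by
  induction w with
  | nil => exact absurd rfl h
  | cons h' _ _ => exact ⟨_, h'⟩

/-- If `G` has no isolated vertex, the attachment graph `G(G_1, …, G_n)` is
unmixed iff `Gs i` and `Gs i \ {x i}` are unmixed for every `i`. -/
theorem stmt_8 {V : Type*} [DecidableEq V] (n : ℕ) (x : Fin n → V) (B : Fin n → Finset V)
    (G : SimpleGraph V) (Gs : Fin n → SimpleGraph V)
    (hxinj : Function.Injective x)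
    (hGsupp : ∀ u v, G.Adj u v → (∃ i, u = x i) ∧ (∃ j, v = x j))
    -- `G` has no isolated vertex
    (hnoiso : ∀ i, ∃ u, G.Adj (x i) u)
    (hxB : ∀ i, x i ∈ B i)
    (hBcard : ∀ i, 2 ≤ (B i).card)
    (hBdisj : ∀ i j, i ≠ j → Disjoint (B i) (B j))
    (hGssupp : ∀ i, ∀ u v, (Gs i).Adj u v → u ∈ B i ∧ v ∈ B i)
    (hconn : ∀ i, ((Gs i).induce ((B i : Set V))).Connected) :
    UnmixedOn (G ⊔ ⨆ i, Gs i) (Finset.univ.biUnion B) ↔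
      ∀ i, UnmixedOn (Gs i) (B i) ∧ UnmixedOn (Gs i) ((B i).erase (x i)) := by
  classical
  set H := G ⊔ ⨆ i, Gs i with hHdef
  set A := Finset.univ.biUnion B with hAdef
  have hmemA : ∀ {u}, u ∈ A ↔ ∃ i, u ∈ B i := by
    intro u; simp [hAdef]
  have hBx : ∀ {k i : Fin n}, x k ∈ B i → k = i := by
    intro k i hk
    by_contra hne
    exact Finset.disjoint_left.1 (hBdisj k i hne) (hxB k) hk
  have hmemBk : ∀ {j i : Fin n} {u v : V}, (Gs j).Adj u v → u ∈ B i → j = i := by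
    intro j i u v hadj hu
    by_contra hne
    exact Finset.disjoint_left.1 (hBdisj j i hne) (hGssupp j u v hadj).1 hu
  have hHadj : ∀ u v, H.Adj u v ↔ G.Adj u v ∨ ∃ i, (Gs i).Adj u v := by
    intro u v; simp [hHdef]
  have hadj_ne : ∀ {i : Fin n} {u v : V}, u ∈ B i → u ≠ x i → H.Adj u v → (Gs i).Adj u v := by
    intro i u v hu hne hadj
    rcases (hHadj u v).1 hadj with hG | ⟨j, hj⟩
    · obtain ⟨⟨k, rfl⟩, -⟩ := hGsupp u v hG
      exact absurd (congrArg x (hBx hu)) hne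
    · obtain rfl := hmemBk hj hu
      exact hj
  -- x i has a neighbor inside B i
  have hnbr : ∀ i, ∃ y, y ∈ B i ∧ (Gs i).Adj (x i) y := by
    intro i
    obtain ⟨y0, hy0, hy0ne⟩ := Finset.exists_mem_ne (lt_of_lt_of_le one_lt_two (hBcard i)) (x i)
    have hxmem : (x i : V) ∈ (B i : Set V) := hxB i
    have hy0mem : (y0 : V) ∈ (B i : Set V) := hy0
    obtain ⟨w⟩ := (hconn i).preconnected ⟨x i, hxmem⟩ ⟨y0, hy0mem⟩
    obtain ⟨c, hc⟩ := walk_first_adj w (by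
      intro h
      exact hy0ne (congrArg Subtype.val h).symm)
    refine ⟨c.1, c.2, ?_⟩
    simpa [SimpleGraph.comap_adj] using hc
  -- a maximal independent set of Gs j on B j avoiding x j
  have hDex : ∀ j, ∃ D : Finset V, IsMaxIndepIn (Gs j) (B j) D ∧ x j ∉ D := by
    intro j
    obtain ⟨y, hyB, hadj⟩ := hnbr j
    obtain ⟨D, hsub, hD⟩ := exists_max_ext (Gs j) (B j) {y}
      ⟨Finset.singleton_subset_iff.2 hyB, by
        intro u hu v hv
        rw [Finset.mem_singleton] at hu hv
        subst hu; subst hv; exact (Gs j).irrefl⟩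
    refine ⟨D, hD, fun hx' => ?_⟩
    exact hD.1.2 (x j) hx' y (hsub (Finset.mem_singleton_self y)) hadj
  -- such a set is also maximal on B j \ {x j}
  have hDerase : ∀ {j : Fin n} {D : Finset V}, IsMaxIndepIn (Gs j) (B j) D → x j ∉ D →
      IsMaxIndepIn (Gs j) ((B j).erase (x j)) D := by
    intro j D hD hx'
    refine ⟨⟨fun u hu => Finset.mem_erase.2 ⟨fun h => hx' (h ▸ hu), hD.1.1 hu⟩, hD.1.2⟩, ?_⟩
    intro T hT hsub
    exact hD.2 T ⟨hT.1.trans (Finset.erase_subset _ _), hT.2⟩ hsub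
  -- domination for maximal sets of H
  have hdomH : ∀ {S : Finset V}, IsMaxIndepIn H A S → ∀ {i : Fin n} {y : V}, y ∈ B i →
      y ≠ x i → y ∉ S → ∃ z ∈ S ∩ B i, (Gs i).Adj y z := by
    intro S hS i y hy hyne hyS
    obtain ⟨z, hz, hadj⟩ := max_dominates hS (hmemA.2 ⟨i, hy⟩) hyS
    have hadj' := hadj_ne hy hyne hadj
    exact ⟨z, Finset.mem_inter.2 ⟨hz, (hGssupp i y z hadj').2⟩, hadj'⟩
  -- structure lemma, case x i ∈ S
  have hs2 : ∀ {S : Finset V}, IsMaxIndepIn H A S → ∀ i, x i ∈ S →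
      IsMaxIndepIn (Gs i) (B i) (S ∩ B i) := by
    intro S hS i hxi
    constructor
    · refine ⟨Finset.inter_subset_right, ?_⟩
      intro u hu v hv hadj
      exact hS.1.2 u (Finset.mem_inter.1 hu).1 v (Finset.mem_inter.1 hv).1
        ((hHadj u v).2 (Or.inr ⟨i, hadj⟩)) 
    · intro T hT hsub
      refine Finset.Subset.antisymm hsub fun y hyT => ?_
      by_contra hyS'
      have hyB : y ∈ B i := hT.1 hyT
      have hyS : y ∉ S := fun h => hyS' (Finset.mem_inter.2 ⟨h, hyB⟩)
      have hyne : y ≠ x i := by rintro rfl; exact hyS hxi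
      obtain ⟨z, hz, hadj⟩ := hdomH hS hyB hyne hyS
      exact hT.2 y hyT z (hsub hz) hadj
  -- structure lemma, case x i ∉ S
  have hs3 : ∀ {S : Finset V}, IsMaxIndepIn H A S → ∀ i, x i ∉ S →
      IsMaxIndepIn (Gs i) ((B i).erase (x i)) (S ∩ B i) := by
    intro S hS i hxi
    constructor
    · refine ⟨fun u hu => Finset.mem_erase.2 ⟨?_, (Finset.mem_inter.1 hu).2⟩, ?_⟩
      · rintro rfl; exact hxi (Finset.mem_inter.1 hu).1
      · intro u hu v hv hadj
        exact hS.1.2 u (Finset.mem_inter.1 hu).1 v (Finset.mem_inter.1 hv).1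
          ((hHadj u v).2 (Or.inr ⟨i, hadj⟩))
    · intro T hT hsub
      refine Finset.Subset.antisymm hsub fun y hyT => ?_
      by_contra hyS'
      obtain ⟨hyne, hyB⟩ := Finset.mem_erase.1 (hT.1 hyT)
      have hyS : y ∉ S := fun h => hyS' (Finset.mem_inter.2 ⟨h, hyB⟩)
      obtain ⟨z, hz, hadj⟩ := hdomH hS hyB hyne hyS
      exact hT.2 y hyT z (hsub hz) hadj
  -- construction of maximal sets of H from per-block data
  have hbuild : ∀ (T : Fin n → Finset V),
      (∀ k, T k ⊆ B k) →
      (∀ k, ∀ u ∈ T k, ∀ v ∈ T k, ¬(Gs k).Adj u v) →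
      (∀ k l, x k ∈ T k → x l ∈ T l → ¬G.Adj (x k) (x l)) →
      (∀ k, ∀ y ∈ B k, y ∉ T k →
        (∃ z ∈ T k, (Gs k).Adj y z) ∨ (y = x k ∧ ∃ l, x l ∈ T l ∧ G.Adj (x k) (x l))) →
      IsMaxIndepIn H A (Finset.univ.biUnion T) := by
    intro T h1 h2 h3 h4
    have hmem : ∀ {u}, u ∈ Finset.univ.biUnion T ↔ ∃ k, u ∈ T k := by
      intro u; simp
    constructor
    · constructor
      · intro u hu
        obtain ⟨k, hk⟩ := hmem.1 hu
        exact hmemA.2 ⟨k, h1 k hk⟩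
      · intro u hu v hv hadj
        obtain ⟨a, ha⟩ := hmem.1 hu
        obtain ⟨b, hb⟩ := hmem.1 hv
        rcases (hHadj u v).1 hadj with hG | ⟨k, hk⟩
        · obtain ⟨⟨c, rfl⟩, ⟨d, rfl⟩⟩ := hGsupp u v hG
          have hca : c = a := hBx (h1 a ha)
          have hdb : d = b := hBx (h1 b hb)
          exact h3 c d (hca.symm ▸ ha) (hdb.symm ▸ hb) hG
        · have hka : k = a := hmemBk hk (h1 a ha)
          have hvB := (hGssupp k u v hk).2
          have hba : b = k := by
            by_contra hne
            exact Finset.disjoint_left.1 (hBdisj b k hne) (h1 b hb) hvB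
          exact h2 k u (hka.symm ▸ ha) v (hba ▸ hb) hk
    · intro T' hT' hsub
      refine Finset.Subset.antisymm hsub fun y hyT' => ?_
      by_contra hyS
      obtain ⟨k, hyB⟩ := hmemA.1 (hT'.1 hyT')
      have hyTk : y ∉ T k := fun h => hyS (hmem.2 ⟨k, h⟩)
      rcases h4 k y hyB hyTk with ⟨z, hz, hadj⟩ | ⟨rfl, l, hl, hadjG⟩
      · exact hT'.2 y hyT' z (hsub (hmem.2 ⟨k, hz⟩)) ((hHadj y z).2 (Or.inr ⟨k, hadj⟩))
      · exact hT'.2 _ hyT' (x l) (hsub (hmem.2 ⟨l, hl⟩)) ((hHadj _ _).2 (Or.inl hadjG))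
  -- cardinality decomposition
  have hcarddec : ∀ {S : Finset V}, S ⊆ A → S.card = ∑ i, (S ∩ B i).card := by
    intro S hSA
    have hSeq : S = Finset.univ.biUnion (fun i => S ∩ B i) := by
      ext u
      simp only [Finset.mem_biUnion, Finset.mem_inter, Finset.mem_univ, true_and]
      constructor
      · intro hu
        obtain ⟨i, hi⟩ := hmemA.1 (hSA hu)
        exact ⟨i, hu, hi⟩
      · rintro ⟨i, hu, -⟩; exact hu
    have h2 := Finset.card_biUnion (s := (Finset.univ : Finset (Fin n)))
      (t := fun i => S ∩ B i) (fun i _ j _ hij =>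
        (hBdisj i j hij).mono Finset.inter_subset_right Finset.inter_subset_right)
    rw [← hSeq] at h2
    exact h2
  have hcardbi : ∀ (T : Fin n → Finset V), (∀ k, T k ⊆ B k) →
      (Finset.univ.biUnion T).card = ∑ k, (T k).card := by
    intro T h1
    refine Finset.card_biUnion ?_
    intro i _ j _ hij
    exact (hBdisj i j hij).mono (h1 i) (h1 j)
  constructor
  · -- forward direction
    intro hU i
    choose D hD1 hD2 using hDex
    constructor
    · -- Gs i unmixed on B i
      intro M M' hM hM'
      have key : ∀ N, IsMaxIndepIn (Gs i) (B i) N →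
          IsMaxIndepIn H A (Finset.univ.biUnion fun k => if k = i then N else D k) := by
        intro N hN
        apply hbuild
        · intro k
          by_cases hk : k = i
          · subst hk; simp only [if_pos rfl]; exact hN.1.1
          · simp only [if_neg hk]; exact (hD1 k).1.1
        · intro k
          by_cases hk : k = i
          · subst hk; simp only [if_pos rfl]; exact hN.1.2
          · simp only [if_neg hk]; exact (hD1 k).1.2
        · intro k l hk hl hadj
          by_cases hki : k = i
          · by_cases hli : l = i
            · subst hki; subst hli; exact (G.irrefl hadj)
            · rw [if_neg hli] at hl; exact hD2 l hl
          · rw [if_neg hki] at hk; exact hD2 k hk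
        · intro k y hy hyT
          left
          by_cases hk : k = i
          · subst hk
            rw [if_pos rfl] at hyT ⊢
            obtain ⟨z, hz, hadj⟩ := max_dominates hN hy hyT
            exact ⟨z, hz, hadj⟩
          · rw [if_neg hk] at hyT ⊢
            exact max_dominates (hD1 k) hy hyT
      have hcardeq : ∀ N, N ⊆ B i →
          (Finset.univ.biUnion fun k => if k = i then N else D k).card =
            N.card + ∑ k ∈ Finset.univ.erase i, (D k).card := by
        intro N hNB
        rw [hcardbi _ (fun k => by
          by_cases hk : k = i
          · subst hk; simp only [if_pos rfl]; exact hNB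
          · simp only [if_neg hk]; exact (hD1 k).1.1)]
        rw [← Finset.add_sum_erase _ _ (Finset.mem_univ i), if_pos rfl]
        congr 1
        refine Finset.sum_congr rfl fun k hk => ?_
        rw [if_neg (Finset.ne_of_mem_erase hk)]
      have hfin := hU _ _ (key M hM) (key M' hM')
      rw [hcardeq M hM.1.1, hcardeq M' hM'.1.1] at hfin
      omega
    · -- Gs i unmixed on B i \ {x i}
      obtain ⟨u, hGu⟩ := hnoiso i
      obtain ⟨j, rfl⟩ := (hGsupp _ _ hGu).2
      have hji : j ≠ i := by
        rintro rfl
        exact G.irrefl hGu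
      obtain ⟨E, hEsub, hE⟩ := exists_max_ext (Gs j) (B j) {x j}
        ⟨Finset.singleton_subset_iff.2 (hxB j), by
          intro a ha b hb
          rw [Finset.mem_singleton] at ha hb
          subst ha; subst hb; exact (Gs j).irrefl⟩
      have hxE : x j ∈ E := hEsub (Finset.mem_singleton_self _)
      intro M M' hM hM'
      have key : ∀ N, IsMaxIndepIn (Gs i) ((B i).erase (x i)) N →
          IsMaxIndepIn H A (Finset.univ.biUnion fun k =>
            if k = i then N else if k = j then E else D k) := by
        intro N hN
        have hNsub : N ⊆ B i := hN.1.1.trans (Finset.erase_subset _ _)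
        have hNx : x i ∉ N := fun h => (Finset.mem_erase.1 (hN.1.1 h)).1 rfl
        apply hbuild
        · intro k
          by_cases hk : k = i
          · subst hk; simp only [if_pos rfl]; exact hNsub
          · by_cases hkj : k = j
            · subst hkj; simp only [if_neg hk, if_pos rfl]; exact hE.1.1
            · simp only [if_neg hk, if_neg hkj]; exact (hD1 k).1.1
        · intro k
          by_cases hk : k = i
          · subst hk; simp only [if_pos rfl]; exact hN.1.2
          · by_cases hkj : k = j
            · subst hkj; simp only [if_neg hk, if_pos rfl]; exact hE.1.2
            · simp only [if_neg hk, if_neg hkj]; exact (hD1 k).1.2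
        · intro k l hk hl hadj
          have hxk : ∀ m : Fin n, x m ∈ (if m = i then N else if m = j then E else D m) →
              m = j := by
            intro m hm
            by_cases hmi : m = i
            · subst hmi; rw [if_pos rfl] at hm; exact absurd hm hNx
            · by_cases hmj : m = j
              · exact hmj
              · rw [if_neg hmi, if_neg hmj] at hm; exact absurd hm (hD2 m)
          obtain rfl := hxk k hk
          obtain rfl := hxk l hl
          exact G.irrefl hadj
        · intro k y hy hyT
          by_cases hk : k = i
          · subst hk
            rw [if_pos rfl] at hyT
            by_cases hyx : y = x k
            · subst hyx
              refine Or.inr ⟨rfl, j, ?_, hGu⟩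
              rw [if_neg hji, if_pos rfl]
              exact hxE
            · left
              rw [if_pos rfl]
              exact max_dominates hN (Finset.mem_erase.2 ⟨hyx, hy⟩) hyT
          · left
            by_cases hkj : k = j
            · subst hkj
              rw [if_neg hk, if_pos rfl] at hyT ⊢
              exact max_dominates hE hy hyT
            · rw [if_neg hk, if_neg hkj] at hyT ⊢
              exact max_dominates (hD1 k) hy hyT
      have hcardeq : ∀ N, N ⊆ B i →
          (Finset.univ.biUnion fun k => if k = i then N else if k = j then E else D k).card =
            N.card + ∑ k ∈ Finset.univ.erase i, ((if k = j then E else D k)).card := by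
        intro N hNB
        rw [hcardbi _ (fun k => by
          by_cases hk : k = i
          · subst hk; simp only [if_pos rfl]; exact hNB
          · by_cases hkj : k = j
            · subst hkj; simp only [if_neg hk, if_pos rfl]; exact hE.1.1
            · simp only [if_neg hk, if_neg hkj]; exact (hD1 k).1.1)]
        rw [← Finset.add_sum_erase _ _ (Finset.mem_univ i), if_pos rfl]
        congr 1
        refine Finset.sum_congr rfl fun k hk => ?_
        rw [if_neg (Finset.ne_of_mem_erase hk)]
      have hfin := hU _ _ (key M hM) (key M' hM')
      rw [hcardeq M (hM.1.1.trans (Finset.erase_subset _ _)),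
        hcardeq M' (hM'.1.1.trans (Finset.erase_subset _ _))] at hfin
      omega
  · -- backward direction
    intro hR S T hS hT
    have hWex : ∀ i, ∃ W : Finset V, IsMaxIndepIn (Gs i) ((B i).erase (x i)) W := by
      intro i
      obtain ⟨W, -, hW⟩ := exists_max_ext (Gs i) ((B i).erase (x i)) ∅
        ⟨Finset.empty_subset _, by simp⟩
      exact ⟨W, hW⟩
    choose W hW using hWex
    have hcardi : ∀ {S : Finset V}, IsMaxIndepIn H A S → ∀ i,
        (S ∩ B i).card = (W i).card := by
      intro S hSm i
      by_cases hx' : x i ∈ S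
      · obtain ⟨M0, hM0a, hM0x⟩ := hDex i
        have hM0b := hDerase hM0a hM0x
        calc (S ∩ B i).card = M0.card := (hR i).1 _ _ (hs2 hSm i hx') hM0a
          _ = (W i).card := (hR i).2 _ _ hM0b (hW i)
      · exact (hR i).2 _ _ (hs3 hSm i hx') (hW i)
    rw [hcarddec hS.1.1, hcarddec hT.1.1]
    exact Finset.sum_congr rfl fun i _ => (hcardi hS i).trans (hcardi hT i).symm
end
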